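/- arXiv:math/9908121 — 4 statements merged into one kernel-verified Lean document; each statement's English description precedes it below -/
import Mathlib

section
/- Let X be a complete metric space with a finite Borel measure μ, and let φ: [0,∞) → [0,∞) be a continuous strictly increasing function with φ(0)=0 and lim_{x→∞} φ(x) > μ(X). Call a point x ∈ X regular if μ(B(x,t)) < φ(t) for all t > 0, where B(x,t) is the closed ball. Then for any 0 < γ < 1/2 there exists a sequence of closed balls B_k = B(x_k, t_k) whose union contains all irregular points and such that ∑_{k≥1} φ(γ t_k) ≤ μ(X). -/
open MeasureTheory Metric Set

/-- Gorin's covering lemma: for a majorant `φ` on a complete metric space with finite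
Borel measure `μ`, and any `0 < γ < 1/2`, there is a sequence of closed balls covering
all irregular points with `∑ φ(γ t_k) ≤ μ(X)`. -/
theorem gorin_lemma {X : Type*} [MetricSpace X] [CompleteSpace X] [Nonempty X]
    [MeasurableSpace X] [BorelSpace X] (μ : Measure X) [IsFiniteMeasure μ]
    (φ : ℝ → ℝ) (hφcont : ContinuousOn φ (Ici 0)) (hφmono : StrictMonoOn φ (Ici 0))
    (hφnonneg : ∀ x ≥ (0:ℝ), 0 ≤ φ x) (hφ0 : φ 0 = 0)
    (hφlim : ∃ T ≥ (0:ℝ), μ univ < ENNReal.ofReal (φ T))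
    (γ : ℝ) (hγ0 : 0 < γ) (hγ : γ < 1 / 2) :
    ∃ (x : ℕ → X) (t : ℕ → ℝ), (∀ k, 0 ≤ t k) ∧
      ({y : X | ¬ ∀ s > (0:ℝ), μ (closedBall y s) < ENNReal.ofReal (φ s)} ⊆
        ⋃ k, closedBall (x k) (t k)) ∧
      ∑' k, ENNReal.ofReal (φ (γ * t k)) ≤ μ univ := by
  classical
  obtain ⟨T, hT0, hTμ⟩ := hφlim
  set I : Set X := {y : X | ¬ ∀ s > (0:ℝ), μ (closedBall y s) < ENNReal.ofReal (φ s)} with hIdef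
  have hex : ∀ y ∈ I, ∃ s, 0 < s ∧ ENNReal.ofReal (φ s) ≤ μ (closedBall y s) := by
    intro y hy
    simp only [hIdef, mem_setOf_eq] at hy
    push_neg at hy
    obtain ⟨s, hs, h⟩ := hy
    exact ⟨s, hs, h⟩
  choose! r hr0 hrμ using hex
  -- radii are bounded by T
  have hrT : ∀ y ∈ I, r y ≤ T := by
    intro y hy
    by_contra h
    push_neg at h
    have hφpos : 0 < φ T := by
      by_cases hT : T = 0
      · -- then μ univ < ofReal (φ 0) = 0, impossible
        exfalso
        rw [hT, hφ0] at hTμ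
        simp at hTμ
      · exact hφ0 ▸ hφmono Set.self_mem_Ici hT0 (lt_of_le_of_ne hT0 (Ne.symm hT))
    have h1 : φ T < φ (r y) := hφmono hT0 (le_of_lt (hT0.trans_lt h)) h
    have h2 : ENNReal.ofReal (φ T) < ENNReal.ofReal (φ (r y)) :=
      (ENNReal.ofReal_lt_ofReal_iff (hφpos.trans h1)).2 h1
    have : μ univ < μ univ :=
      hTμ.trans (h2.trans_le ((hrμ y hy).trans (measure_mono (subset_univ _))))
    exact lt_irrefl _ this
  -- Vitali covering
  have hτ : 1 < (1 - γ) / γ := by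
    rw [lt_div_iff₀ hγ0]; linarith
  obtain ⟨u, hut, hdisj, hcover⟩ :=
    Vitali.exists_disjoint_subfamily_covering_enlargement
      (fun y : X => closedBall y (r y)) I r ((1 - γ) / γ) hτ
      (fun y hy => (hr0 y hy).le) T (fun y hy => hrT y hy)
      (fun y hy => Metric.nonempty_closedBall.2 (hr0 y hy).le)
  -- u is countable: disjoint balls of positive measure
  have hposmeas : ∀ b : u, 0 < μ (closedBall (b : X) (r (b : X))) := by
    intro b
    have hbI : (b : X) ∈ I := hut b.2
    refine lt_of_lt_of_le ?_ (hrμ _ hbI)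
    rw [ENNReal.ofReal_pos]
    exact hφ0 ▸ hφmono Set.self_mem_Ici (hr0 _ hbI).le (hr0 _ hbI)
  have hdisj' : Pairwise (Function.onFun Disjoint fun b : u => closedBall (b : X) (r (b : X))) := by
    intro b b' hne
    exact hdisj b.2 b'.2 (fun h => hne (Subtype.ext h))
  have hucnt : Countable u := by
    have := MeasureTheory.Measure.countable_meas_pos_of_disjoint_iUnion₀
      (μ := μ) (As := fun b : u => closedBall (b : X) (r (b : X)))
      (fun b => (measurableSet_closedBall).nullMeasurableSet)
      (fun b b' hne => (hdisj' hne).aedisjoint)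
    have huniv : {b : u | 0 < μ (closedBall (b : X) (r (b : X)))} = univ := by
      ext b; simp [hposmeas b]
    rw [huniv] at this
    exact (countable_univ_iff.1 this)
  obtain ⟨g, hg⟩ := exists_injective_nat u
  -- define the sequence of balls
  set p : ℕ → Option u := Function.partialInv g with hp
  have hpg : ∀ b : u, p (g b) = some b := fun b => Function.partialInv_left hg b
  have hgp : ∀ k (b : u), p k = some b → g b = k := fun k b h =>
    (Function.partialInv_of_injective hg b k).1 h
  set x : ℕ → X := fun k => (p k).elim (Classical.arbitrary X) (fun b => (b : X)) with hx
  set t : ℕ → ℝ := fun k => (p k).elim 0 (fun b => r (b : X) / γ) with ht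
  refine ⟨x, t, ?_, ?_, ?_⟩
  · intro k
    rcases hpk : p k with _ | b
    · simp [ht, hpk]
    · have hbI : (b : X) ∈ I := hut b.2
      simp only [ht, hpk, Option.elim]
      exact div_nonneg (hr0 _ hbI).le hγ0.le
  · intro y hy
    obtain ⟨b, hbu, hint, hle⟩ := hcover y hy
    obtain ⟨z, hz1, hz2⟩ := hint
    have hbI : b ∈ I := hut hbu
    have hd : dist y b ≤ r b / γ := by
      have h1 : dist z y ≤ r y := mem_closedBall.1 hz1
      have h2 : dist z b ≤ r b := mem_closedBall.1 hz2
      have htri := dist_triangle y z b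
      rw [dist_comm z y] at h1
      have : dist y b ≤ r y + r b := by linarith
      have h2 : r y + r b ≤ (1 - γ) / γ * r b + r b := by linarith
      have h3 : (1 - γ) / γ * r b + r b = r b / γ := by field_simp; ring
      linarith
    refine mem_iUnion.2 ⟨g ⟨b, hbu⟩, ?_⟩
    have hxg : x (g ⟨b, hbu⟩) = b := by simp [hx, hpg ⟨b, hbu⟩]
    have htg : t (g ⟨b, hbu⟩) = r b / γ := by simp [ht, hpg ⟨b, hbu⟩]
    rw [hxg, htg]
    exact mem_closedBall.2 hd
  · -- the sum estimate
    set C : ℕ → Set X := fun k => (p k).elim ∅ (fun b => closedBall (b : X) (r (b : X)))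
      with hC
    have hterm : ∀ k, ENNReal.ofReal (φ (γ * t k)) ≤ μ (C k) := by
      intro k
      rcases hpk : p k with _ | b
      · simp [ht, hC, hpk, hφ0]
      · have hbI : (b : X) ∈ I := hut b.2
        have : γ * (r (b : X) / γ) = r (b : X) := by field_simp
        simp only [ht, hC, hpk, Option.elim, this]
        exact hrμ _ hbI
    have hCdisj : Pairwise (Function.onFun Disjoint C) := by
      intro k k' hne
      rcases hpk : p k with _ | b
      · simp [Function.onFun, hC, hpk]
      · rcases hpk' : p k' with _ | b'
        · simp [Function.onFun, hC, hpk']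
        · have hbb' : b ≠ b' := by
            intro h
            apply hne
            rw [← hgp k b hpk, ← hgp k' b' hpk', h]
          simp only [Function.onFun, hC, hpk, hpk', Option.elim]
          exact hdisj b.2 b'.2 (fun h => hbb' (Subtype.ext h))
    have hCmeas : ∀ k, MeasurableSet (C k) := by
      intro k
      rcases hpk : p k with _ | b
      · simp [hC, hpk]
      · simp only [hC, hpk, Option.elim]
        exact measurableSet_closedBall
    calc ∑' k, ENNReal.ofReal (φ (γ * t k)) ≤ ∑' k, μ (C k) := ENNReal.tsum_le_tsum hterm
      _ ≤ μ (⋃ k, C k) := MeasureTheory.tsum_meas_le_meas_iUnion_of_disjoint μ hCmeas hCdisj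
      _ ≤ μ univ := measure_mono (subset_univ _)
end

section
/- Let z ∈ C be a point, μ a finite Borel measure on C supported in the closed unit disk with μ(C) = k, and set u(z) = ∫ log|z−ξ| dμ(ξ). Fix N ≥ max{1,H} with H > 0, and let n(t;z) = μ({ξ : |z−ξ| ≤ t}). If n(t;z) < (pt)^d for all t > 0, where p = (kd)^{1/d}/H, then u(z) ≥ k log(H/e). -/
open MeasureTheory Metric Set Complex

/-- Potential lower bound at a regular point: if the counting function satisfies
`n(t;z) < (pt)^d` with `p = (kd)^{1/d}/H`, then `u(z) ≥ k log(H/e)`. -/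
theorem potential_lower_bound_at_regular_point
    (μ : Measure ℂ) [IsFiniteMeasure μ] (k d H : ℝ) (hk : 0 ≤ k) (hd : 0 < d)
    (hH : 0 < H) (hμk : μ univ = ENNReal.ofReal k)
    (hsupp : μ (closedBall 0 1)ᶜ = 0) (z : ℂ)
    (hcount : ∀ t > (0:ℝ),
      (μ {ξ : ℂ | ‖z - ξ‖ ≤ t}).toReal < ((k * d) ^ (1/d) / H * t) ^ d) :
    k * Real.log (H / Real.exp 1) ≤ ∫ ξ, Real.log ‖z - ξ‖ ∂μ := by
  set r : ℂ → ℝ := fun ξ => ‖z - ξ‖ with hrdef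
  set φ : ℂ → ℝ := fun ξ => max (Real.log H - Real.log (r ξ)) 0 with hφdef
  have hφ0 : ∀ ξ, 0 ≤ φ ξ := fun ξ => le_max_right _ _
  have hrmeas : Measurable r :=
    (continuous_norm.comp (continuous_const.sub continuous_id)).measurable
  have hφmeas : Measurable φ :=
    (measurable_const.sub (Real.measurable_log.comp hrmeas)).max measurable_const
  have hLmeas : Measurable (fun ξ => Real.log (r ξ)) := Real.measurable_log.comp hrmeas
  have hμuniv : (μ univ).toReal = k := by rw [hμk, ENNReal.toReal_ofReal hk]
  -- rpow computation : the bound from `hcount` at `t = H * exp (-s)` equals `k*d*exp(-(d*s))`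
  have hval : ∀ s : ℝ, ((k * d) ^ (1/d) / H * (H * Real.exp (-s))) ^ d
      = k * d * Real.exp (-(d * s)) := by
    intro s
    have h1 : (k * d) ^ (1/d) / H * (H * Real.exp (-s)) = (k * d) ^ (1/d) * Real.exp (-s) := by
      field_simp
    have h2 : ((k * d) ^ (1/d)) ^ d = k * d := by
      rw [← Real.rpow_mul (mul_nonneg hk hd.le), one_div_mul_cancel hd.ne', Real.rpow_one]
    have h3 : (Real.exp (-s)) ^ d = Real.exp (-(d * s)) := by
      rw [Real.rpow_def_of_pos (Real.exp_pos _), Real.log_exp]; ring_nf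
    rw [h1, Real.mul_rpow (Real.rpow_nonneg (mul_nonneg hk hd.le) _) (Real.exp_pos _).le,
      h2, h3]
  -- layer cake formula
  have hlayer : ∫⁻ ξ, ENNReal.ofReal (φ ξ) ∂μ = ∫⁻ s in Ioi (0:ℝ), μ {ξ | s ≤ φ ξ} :=
    lintegral_eq_lintegral_meas_le μ (Filter.Eventually.of_forall hφ0) hφmeas.aemeasurable
  -- bound on the distribution function
  have hmb : ∀ s ∈ Ioi (0:ℝ), μ {ξ | s ≤ φ ξ} ≤ ENNReal.ofReal (k * d * Real.exp (-(d * s))) := by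
    intro s hs
    have hs0 : (0:ℝ) < s := hs
    set t := H * Real.exp (-s) with htdef
    have ht0 : 0 < t := mul_pos hH (Real.exp_pos _)
    have hsub : {ξ : ℂ | s ≤ φ ξ} ⊆ {ξ : ℂ | r ξ ≤ t} := by
      intro ξ hξ
      simp only [mem_setOf_eq] at hξ ⊢
      rcases (norm_nonneg (z - ξ)).eq_or_lt with h0 | h0
      · have h00 : r ξ = 0 := h0.symm
        rw [h00]; exact ht0.le
      · have hle : s ≤ Real.log H - Real.log (r ξ) := by
          rcases le_max_iff.mp hξ with h | h
          · exact h
          · linarith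
        have hlog : Real.log (r ξ) ≤ Real.log H - s := by linarith
        calc r ξ = Real.exp (Real.log (r ξ)) := (Real.exp_log h0).symm
          _ ≤ Real.exp (Real.log H - s) := Real.exp_le_exp.mpr hlog
          _ = t := by rw [Real.exp_sub, Real.exp_log hH, htdef, div_eq_mul_inv,
              ← Real.exp_neg]
    have hcnt := (hcount t ht0).le
    rw [hval s] at hcnt
    calc μ {ξ | s ≤ φ ξ} ≤ μ {ξ : ℂ | r ξ ≤ t} := measure_mono hsub
      _ ≤ ENNReal.ofReal (k * d * Real.exp (-(d * s))) := by
          rw [ENNReal.le_ofReal_iff_toReal_le (measure_ne_top μ _)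
            (by positivity)]
          exact hcnt
  -- integral of the exponential bound
  have hexpint : IntegrableOn (fun s : ℝ => k * d * Real.exp (-(d * s))) (Ioi 0) := by
    have := (exp_neg_integrableOn_Ioi 0 hd).const_mul (k * d)
    simp only [neg_mul] at this
    exact this
  have hexpval : (∫ s in Ioi (0:ℝ), k * d * Real.exp (-(d * s))) = k := by
    rw [MeasureTheory.integral_const_mul]
    have := MeasureTheory.integral_comp_mul_left_Ioi (fun x : ℝ => Real.exp (-x)) 0 hd
    simp only [mul_zero, smul_eq_mul] at this
    rw [this, integral_exp_neg_Ioi_zero]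
    field_simp
  -- the key lintegral bound
  have hlint : ∫⁻ ξ, ENNReal.ofReal (φ ξ) ∂μ ≤ ENNReal.ofReal k := by
    rw [hlayer]
    calc ∫⁻ s in Ioi (0:ℝ), μ {ξ | s ≤ φ ξ}
        ≤ ∫⁻ s in Ioi (0:ℝ), ENNReal.ofReal (k * d * Real.exp (-(d * s))) :=
          setLIntegral_mono' measurableSet_Ioi hmb
      _ = ENNReal.ofReal (∫ s in Ioi (0:ℝ), k * d * Real.exp (-(d * s))) :=
          (ofReal_integral_eq_lintegral_ofReal hexpint
            (Filter.Eventually.of_forall fun s => by positivity)).symm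
      _ = ENNReal.ofReal k := by rw [hexpval]
  -- φ is integrable with ∫ φ ≤ k
  have hφint : Integrable φ μ := by
    refine ⟨hφmeas.aestronglyMeasurable, ?_⟩
    rw [hasFiniteIntegral_iff_ofReal (Filter.Eventually.of_forall hφ0)]
    exact lt_of_le_of_lt hlint ENNReal.ofReal_lt_top
  have hφle : ∫ ξ, φ ξ ∂μ ≤ k := by
    have heq := ofReal_integral_eq_lintegral_ofReal hφint (Filter.Eventually.of_forall hφ0)
    have h2 : ENNReal.ofReal (∫ ξ, φ ξ ∂μ) ≤ ENNReal.ofReal k := heq ▸ hlint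
    exact (ENNReal.ofReal_le_ofReal_iff hk).mp h2
  -- a.e. support in the closed unit ball
  have hae : ∀ᵐ ξ ∂μ, ξ ∈ closedBall (0:ℂ) 1 := by
    have := (MeasureTheory.measure_eq_zero_iff_ae_notMem).mp hsupp
    simpa using this
  -- pointwise lower bound
  have hlow : ∀ ξ, Real.log H - φ ξ ≤ Real.log (r ξ) := by
    intro ξ
    have := le_max_left (Real.log H - Real.log (r ξ)) 0
    have hφξ : Real.log H - Real.log (r ξ) ≤ φ ξ := this
    linarith
  -- upper bound on the ball
  set M : ℝ := ‖z‖ + 1 with hMdef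
  have hM1 : (1:ℝ) ≤ M := by
    have := norm_nonneg z
    simp only [hMdef]
    linarith
  have hlogM : 0 ≤ Real.log M := Real.log_nonneg hM1
  have hup : ∀ ξ ∈ closedBall (0:ℂ) 1, Real.log (r ξ) ≤ Real.log M := by
    intro ξ hξ
    have hrM : r ξ ≤ M := by
      have h1 : ‖ξ‖ ≤ 1 := by
        simpa using mem_closedBall_zero_iff.mp hξ
      calc r ξ ≤ ‖z‖ + ‖ξ‖ := by
            simpa [hrdef] using norm_sub_le z ξ
        _ ≤ M := by rw [hMdef]; linarith
    rcases (norm_nonneg (z - ξ)).eq_or_lt with h0 | h0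
    · have h00 : r ξ = 0 := h0.symm
      rw [h00, Real.log_zero]; exact hlogM
    · exact Real.log_le_log h0 hrM
  -- integrability of the potential integrand
  have hgint : Integrable (fun ξ => Real.log M + |Real.log H| + φ ξ) μ :=
    (integrable_const _).add hφint
  have hLbound : ∀ᵐ ξ ∂μ, ‖Real.log (r ξ)‖ ≤ Real.log M + |Real.log H| + φ ξ := by
    filter_upwards [hae] with ξ hξ
    rw [Real.norm_eq_abs, abs_le]
    constructor
    · have h1 := hlow ξ
      have h2 : -|Real.log H| ≤ Real.log H := neg_abs_le _
      have h3 := hφ0 ξ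
      linarith
    · have h1 := hup ξ hξ
      have h2 : 0 ≤ |Real.log H| := abs_nonneg _
      have h3 := hφ0 ξ
      linarith
  have hLint : Integrable (fun ξ => Real.log (r ξ)) μ :=
    Integrable.mono' hgint hLmeas.aestronglyMeasurable hLbound
  -- conclude
  have hfinal : ∫ ξ, (Real.log H - φ ξ) ∂μ ≤ ∫ ξ, Real.log (r ξ) ∂μ :=
    integral_mono ((integrable_const _).sub hφint) hLint fun ξ => hlow ξ
  have hconst : ∫ ξ, (Real.log H - φ ξ) ∂μ = k * Real.log H - ∫ ξ, φ ξ ∂μ := by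
    rw [integral_sub (integrable_const _) hφint, integral_const, measureReal_def, hμuniv, smul_eq_mul]
  have hlogdiv : Real.log (H / Real.exp 1) = Real.log H - 1 := by
    rw [Real.log_div hH.ne' (Real.exp_ne_zero 1), Real.log_exp]
  calc k * Real.log (H / Real.exp 1) = k * Real.log H - k := by rw [hlogdiv]; ring
    _ ≤ k * Real.log H - ∫ ξ, φ ξ ∂μ := by linarith
    _ = ∫ ξ, (Real.log H - φ ξ) ∂μ := hconst.symm
    _ ≤ ∫ ξ, Real.log (r ξ) ∂μ := hfinal
end

section
/- Let K ⊂ D_{1/2} ⊂ C be compact with H^d(K) < ∞. Suppose there exist constants L and C > 0 such that for every x ∈ K, every t with D(x,t) ⊂ D(x,3t/2) ⊂ D_{2/3}, every compact ω ⊂ K ∩ D(x,t) with H^d(ω) = ε, and every f subharmonic in D_1 with sup_{D_1} f ≤ 3/2 and sup_{D_{2/3}} f ≥ 1/6, one has sup_{D(x,t)} f ≤ sup_ω f + L + C log( t / ε^{1/d} ). Then K is d-regular: K ∈ A(d,c) for some c > 0, i.e., H^d(K ∩ D(x,t)) ≤ c t^d for all x ∈ K and 0 < t ≤ diam K. -/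
open MeasureTheory Metric Set Complex

def SubharmonicOn (f : ℂ → ℝ) (U : Set ℂ) : Prop :=
  UpperSemicontinuousOn f U ∧
  ∀ x : ℂ, ∀ ρ : ℝ, 0 < ρ → closedBall x ρ ⊆ U →
    f x ≤ (2 * Real.pi)⁻¹ *
      ∫ θ in (0:ℝ)..(2 * Real.pi), f (x + (ρ : ℂ) * Complex.exp (θ * Complex.I))

lemma subharmonic_const_one : SubharmonicOn (fun _ => (1:ℝ)) (ball 0 1) := by
  constructor
  · exact fun z _ y hy => Filter.Eventually.of_forall fun _ => hy
  · intro x ρ hρ _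
    rw [intervalIntegral.integral_const, smul_eq_mul, mul_one, sub_zero,
      inv_mul_cancel₀ (by positivity : (2*Real.pi) ≠ 0)]

lemma eps_bound (d : ℝ) (hd : 0 < d) (ε t L C : ℝ) (hε : 0 < ε) (ht : 0 < t) (hC : 0 < C)
    (h : (1:ℝ) ≤ 1 + L + C * Real.log (t / ε ^ (1/d))) :
    ε ≤ Real.exp (L/C) ^ d * t ^ d := by
  have hεs : 0 < ε ^ (1/d) := Real.rpow_pos_of_pos hε _
  have hs : 0 < t / ε ^ (1/d) := div_pos ht hεs
  have hlog : -(L/C) ≤ Real.log (t / ε ^ (1/d)) := by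
    rw [← neg_div, div_le_iff₀ hC]; nlinarith
  have hexp : Real.exp (-(L/C)) ≤ t / ε ^ (1/d) :=
    (Real.le_log_iff_exp_le hs).mp hlog
  have h2 : Real.exp (-(L/C)) * ε ^ (1/d) ≤ t := (le_div_iff₀ hεs).mp hexp
  have h3 : ε ^ (1/d) ≤ Real.exp (L/C) * t := by
    calc ε ^ (1/d) = Real.exp (L/C) * (Real.exp (-(L/C)) * ε ^ (1/d)) := by
          rw [← mul_assoc, ← Real.exp_add]; simp
      _ ≤ Real.exp (L/C) * t := mul_le_mul_of_nonneg_left h2 (Real.exp_pos _).le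
  calc ε = (ε ^ (1/d)) ^ d := by
        rw [← Real.rpow_mul hε.le, one_div, inv_mul_cancel₀ hd.ne', Real.rpow_one]
    _ ≤ (Real.exp (L/C) * t) ^ d :=
        Real.rpow_le_rpow (Real.rpow_nonneg hε.le _) h3 hd.le
    _ = Real.exp (L/C) ^ d * t ^ d := Real.mul_rpow (Real.exp_pos _).le ht.le

/-- Proposition 3.3: the Cartan-type inequality forces Ahlfors `d`-regularity. -/
theorem regularity_necessary (K : Set ℂ) (d : ℝ) (hd : 0 < d) (hK : IsCompact K)
    (hK12 : K ⊆ ball (0:ℂ) (1/2)) (hKfin : μH[d] K < ⊤)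
    (L C : ℝ) (hC : 0 < C)
    (hineq : ∀ x ∈ K, ∀ t > (0:ℝ), ball x (3 * t / 2) ⊆ ball (0:ℂ) (2/3) →
      ∀ (ω : Set ℂ) (ε : ℝ), IsCompact ω → ω ⊆ K ∩ ball x t → 0 < ε →
        μH[d] ω = ENNReal.ofReal ε →
        ∀ f : ℂ → ℝ, SubharmonicOn f (ball 0 1) →
          (∀ z ∈ ball (0:ℂ) 1, f z ≤ 3/2) →
          ((1:ℝ)/6 ≤ sSup (f '' ball (0:ℂ) (2/3))) →
          sSup (f '' ball x t) ≤ sSup (f '' ω) + L + C * Real.log (t / ε ^ (1/d))) :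
    ∃ c : ℝ, 0 < c ∧ ∀ x ∈ K, ∀ t : ℝ, 0 < t → t ≤ (EMetric.diam K).toReal →
      μH[d] (K ∩ ball x t) ≤ ENNReal.ofReal (c * t ^ d) := by
  set c1 : ℝ := Real.exp (L/C) ^ d with hc1def
  have hc1 : 0 < c1 := Real.rpow_pos_of_pos (Real.exp_pos _) _
  set m : ℝ := (μH[d] K).toReal with hmdef
  have hm : 0 ≤ m := ENNReal.toReal_nonneg
  have h9 : (0:ℝ) < (9:ℝ) ^ d := Real.rpow_pos_of_pos (by norm_num) _
  refine ⟨c1 + m * (9:ℝ) ^ d + 1, by positivity, ?_⟩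
  intro x hx t ht _
  -- Key: any compact ω ⊆ K ∩ ball x t with t ≤ 1/9 satisfies μH ω ≤ ofReal (c1 * t^d)
  have key : ∀ t' : ℝ, 0 < t' → t' ≤ 1/9 → ∀ ω : Set ℂ, IsCompact ω →
      ω ⊆ K ∩ ball x t' → μH[d] ω ≤ ENNReal.ofReal (c1 * t' ^ d) := by
    intro t' ht' ht'9 ω hωc hωsub
    have hωK : ω ⊆ K := hωsub.trans inter_subset_left
    have hne : μH[d] ω ≠ ⊤ := ((measure_mono hωK).trans_lt hKfin).ne
    by_cases h0 : μH[d] ω = 0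
    · rw [h0]; exact zero_le'
    set ε : ℝ := (μH[d] ω).toReal with hεdef
    have hε : 0 < ε := ENNReal.toReal_pos h0 hne
    have hμ : μH[d] ω = ENNReal.ofReal ε := (ENNReal.ofReal_toReal hne).symm
    have hωne : ω.Nonempty := by
      rcases eq_empty_or_nonempty ω with rfl | h
      · exact absurd measure_empty h0
      · exact h
    have hball : ball x (3 * t' / 2) ⊆ ball (0:ℂ) (2/3) := by
      intro z hz
      have h1 : dist z x < 3 * t' / 2 := mem_ball.mp hz
      have h2 : dist x 0 < 1/2 := mem_ball.mp (hK12 hx)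
      have := dist_triangle z x 0
      rw [mem_ball]
      linarith
    have main := hineq x hx t' ht' hball ω ε hωc hωsub hε hμ
      (fun _ => (1:ℝ)) subharmonic_const_one
      (fun z _ => by norm_num)
      (by rw [Set.Nonempty.image_const (nonempty_ball.2 (by norm_num)) 1,
            csSup_singleton]; norm_num)
    rw [Set.Nonempty.image_const (nonempty_ball.2 ht') 1, csSup_singleton,
      Set.Nonempty.image_const hωne 1, csSup_singleton] at main
    have hεle : ε ≤ c1 * t' ^ d := eps_bound d hd ε t' L C hε ht' hC main
    rw [hμ]
    exact ENNReal.ofReal_le_ofReal hεle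
  by_cases ht9 : t ≤ 1/9
  · -- small t: inner regularity
    by_contra hcon
    push_neg at hcon
    set ν : Measure ℂ := (μH[d]).restrict K with hνdef
    haveI : IsFiniteMeasure ν := by
      constructor
      rw [hνdef, Measure.restrict_apply_univ]
      exact hKfin
    have hrw : μH[d] (K ∩ ball x t) = ν (ball x t) := by
      rw [hνdef, Measure.restrict_apply measurableSet_ball, inter_comm]
    rw [hrw] at hcon
    obtain ⟨F, hFsub, hFcl, hFlt⟩ :=
      measurableSet_ball.exists_lt_isClosed_of_ne_top (μ := ν)
        (measure_ne_top ν _) hcon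
    have hFν : ν F = μH[d] (F ∩ K) := Measure.restrict_apply hFcl.measurableSet
    have hωc : IsCompact (F ∩ K) := hK.inter_left hFcl
    have hωsub : F ∩ K ⊆ K ∩ ball x t := fun z hz => ⟨hz.2, hFsub hz.1⟩
    have hb := key t ht ht9 (F ∩ K) hωc hωsub
    have hc1c : c1 * t ^ d ≤ (c1 + m * (9:ℝ) ^ d + 1) * t ^ d := by
      have htd : (0:ℝ) ≤ t ^ d := (Real.rpow_pos_of_pos ht _).le
      nlinarith [mul_nonneg (by positivity : (0:ℝ) ≤ m * (9:ℝ) ^ d + 1) htd]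
    have : ν F < ν F := by
      calc ν F = μH[d] (F ∩ K) := hFν
        _ ≤ ENNReal.ofReal (c1 * t ^ d) := hb
        _ ≤ ENNReal.ofReal ((c1 + m * (9:ℝ) ^ d + 1) * t ^ d) :=
            ENNReal.ofReal_le_ofReal hc1c
        _ < ν F := hFlt
    exact absurd this (lt_irrefl _)
  · -- large t
    push_neg at ht9
    have h1 : μH[d] (K ∩ ball x t) ≤ μH[d] K := measure_mono inter_subset_left
    have h2 : μH[d] K = ENNReal.ofReal m := (ENNReal.ofReal_toReal hKfin.ne).symm
    have htd : (1/9:ℝ) ^ d ≤ t ^ d := Real.rpow_le_rpow (by norm_num) ht9.le hd.le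
    have hmul : m * (9:ℝ) ^ d * (1/9:ℝ) ^ d = m := by
      rw [mul_assoc, ← Real.mul_rpow (by norm_num) (by norm_num)]
      norm_num [Real.one_rpow]
    have h3 : m ≤ (c1 + m * (9:ℝ) ^ d + 1) * t ^ d := by
      have h4 : m * (9:ℝ) ^ d * (1/9:ℝ) ^ d ≤ m * (9:ℝ) ^ d * t ^ d :=
        mul_le_mul_of_nonneg_left htd (by positivity)
      have htd0 : (0:ℝ) ≤ t ^ d := (Real.rpow_pos_of_pos ht _).le
      nlinarith
    calc μH[d] (K ∩ ball x t) ≤ ENNReal.ofReal m := h1.trans h2.le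
      _ ≤ ENNReal.ofReal ((c1 + m * (9:ℝ) ^ d + 1) * t ^ d) :=
          ENNReal.ofReal_le_ofReal h3
end

section
/- Let f be subharmonic on D_1 satisfying sup_{D_1} f ≤ M_1 and sup_{D_r} f ≥ M_2 (r < 1). Let K ⊂ D_r be compact in A(d,a), and let D(x,t) ⊂ D(x,t/r) ⊂ D_r. Set K_{x,t} = D(x,t) ∩ K, f_{x,t} = sup_{D(x,t)} f, f' = f_{x,t} − f, and let D_{f'}(λ) = H^d({y ∈ K_{x,t} : f'(y) ≥ λ}) be the distribution function of f'. Then, with c = c(r) > 0 from the Cartan-type estimate, D_{f'}(λ) ≤ ((4et)^d a / (r^d d)) · e^{−λ d/(c(M_1 − M_2))} for all λ ≥ 0. -/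
set_option maxHeartbeats 1000000

open MeasureTheory Metric Set Complex

def AhlforsUpper (K : Set ℂ) (d a : ℝ) : Prop :=
  ∀ y ∈ K, ∀ s : ℝ, 0 < s → s ≤ (EMetric.diam K).toReal →
    μH[d] (K ∩ ball y s) ≤ ENNReal.ofReal (a * s ^ d)

lemma pair_hausdorff_zero {d : ℝ} (hd : 0 < d) (A B : ℂ) :
    μH[d] ({A, B} : Set ℂ) = 0 := by
  have hdim : dimH ({A, B} : Set ℂ) = 0 :=
    Set.Finite.dimH_zero ((Set.finite_singleton B).insert A)
  have h := hausdorffMeasure_of_dimH_lt (s := ({A, B} : Set ℂ)) (d := d.toNNReal)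
    (by rw [hdim]; exact_mod_cast Real.toNNReal_pos.2 hd)
  rwa [Real.coe_toNNReal d hd.le] at h

lemma equilateral_sq {p q : ℂ} {D : ℝ} (hD : 0 < D)
    (hp : ‖p‖ = D) (hq : ‖q‖ = D)
    (hpq : ‖p - q‖ = D) : p ^ 2 + q ^ 2 = p * q := by
  have h1 : p * (starRingEnd ℂ) p = (D : ℂ) ^ 2 := by
    rw [Complex.mul_conj, ← Complex.sq_norm, hp]; push_cast; ring
  have h2 : q * (starRingEnd ℂ) q = (D : ℂ) ^ 2 := by
    rw [Complex.mul_conj, ← Complex.sq_norm, hq]; push_cast; ring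
  have h3 : (p - q) * ((starRingEnd ℂ) p - (starRingEnd ℂ) q) = (D : ℂ) ^ 2 := by
    rw [← map_sub, Complex.mul_conj, ← Complex.sq_norm, hpq]; push_cast; ring
  have hsum : p * (starRingEnd ℂ) q + q * (starRingEnd ℂ) p = (D : ℂ) ^ 2 := by
    linear_combination h1 + h2 - h3
  have hD2 : (D : ℂ) ^ 2 ≠ 0 := pow_ne_zero 2 (Complex.ofReal_ne_zero.2 hD.ne')
  have key : (p ^ 2 + q ^ 2 - p * q) * (D : ℂ) ^ 2 = 0 := by
    linear_combination (-(p ^ 2)) * h2 - q ^ 2 * h1 + p * q * hsum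
  rcases mul_eq_zero.1 key with h | h
  · linear_combination h
  · exact absurd h hD2

lemma equilateral_mem {w y z : ℂ} {D : ℝ} (hD : 0 < D)
    (h1 : dist w y = D) (h2 : dist w z = D) (h3 : dist y z = D) :
    w = (y + z) / 2 + (Real.sqrt 3 / 2 : ℝ) * Complex.I * (z - y) ∨
    w = (y + z) / 2 - (Real.sqrt 3 / 2 : ℝ) * Complex.I * (z - y) := by
  have hp : ‖w - y‖ = D := by rwa [← Complex.dist_eq]
  have hq : ‖w - z‖ = D := by rwa [← Complex.dist_eq]
  have hpq : ‖(w - y) - (w - z)‖ = D := by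
    have : (w - y) - (w - z) = -(y - z) := by ring
    rw [this, norm_neg, ← Complex.dist_eq]; exact h3
  have hkey := equilateral_sq hD hp hq hpq
  have hs3 : ((Real.sqrt 3 : ℝ) : ℂ) ^ 2 = 3 := by
    norm_cast
    rw [Real.sq_sqrt]; norm_num
  have hprod :
      (w - ((y + z) / 2 + (Real.sqrt 3 / 2 : ℝ) * Complex.I * (z - y))) *
      (w - ((y + z) / 2 - (Real.sqrt 3 / 2 : ℝ) * Complex.I * (z - y))) = 0 := by
    have hI : (Complex.I : ℂ) ^ 2 = -1 := Complex.I_sq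
    push_cast
    linear_combination hkey + ((z - y) ^ 2 / 4) * hs3 -
      (((Real.sqrt 3 : ℝ) : ℂ) ^ 2 * (z - y) ^ 2 / 4) * hI
  rcases mul_eq_zero.1 hprod with h | h
  · left; linear_combination h
  · right; linear_combination h

lemma exists_dist_eq_diam' {K : Set ℂ} (hK : IsCompact K) (hne : K.Nonempty) :
    ∃ p ∈ K, ∃ q ∈ K, dist p q = Metric.diam K := by
  have hc : ContinuousOn (fun z : ℂ × ℂ => dist z.1 z.2) (K ×ˢ K) :=
    continuous_dist.continuousOn
  have hne2 : (K ×ˢ K).Nonempty := hne.prod hne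
  obtain ⟨z0, hmem, hmax⟩ := (hK.prod hK).exists_isMaxOn hne2 hc
  refine ⟨z0.1, hmem.1, z0.2, hmem.2, le_antisymm
    (Metric.dist_le_diam_of_mem hK.isBounded hmem.1 hmem.2) ?_⟩
  exact Metric.diam_le_of_forall_dist_le dist_nonneg fun a ha b hb =>
    hmax (Set.mk_mem_prod ha hb)

lemma geom_bound {d a : ℝ} (hd : 0 < d) (ha : 0 < a) {K : Set ℂ}
    (hK : IsCompact K) (hreg : AhlforsUpper K d a) (x : ℂ) {t : ℝ} (ht : 0 < t) :
    μH[d] (K ∩ ball x t) ≤ ENNReal.ofReal (2 * (a * (2 * t) ^ d)) := by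
  have h2t : (0:ℝ) < 2 * t := by linarith
  rcases Set.eq_empty_or_nonempty (K ∩ ball x t) with he | ⟨y, hyK, hyx⟩
  · rw [he, measure_empty]; exact zero_le
  have hKb : Bornology.IsBounded K := hK.isBounded
  have hdtop : EMetric.diam K ≠ ⊤ := Metric.isBounded_iff_ediam_ne_top.1 hKb
  set D : ℝ := Metric.diam K with hDdef
  have hDtoReal : (EMetric.diam K).toReal = D := rfl
  have hD0 : 0 ≤ D := Metric.diam_nonneg
  rcases le_or_gt (2 * t) D with hle | hltD
  · have hsub : K ∩ ball x t ⊆ K ∩ ball y (2 * t) := by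
      rintro z ⟨hzK, hzx⟩
      refine ⟨hzK, ?_⟩
      have htri : dist z y ≤ dist z x + dist x y := dist_triangle z x y
      have hxy : dist x y < t := by
        rw [dist_comm]; exact mem_ball.1 hyx
      have hzx' : dist z x < t := mem_ball.1 hzx
      exact mem_ball.2 (by linarith)
    have hpow : (0:ℝ) ≤ a * (2 * t) ^ d :=
      mul_nonneg ha.le (Real.rpow_nonneg h2t.le d)
    calc μH[d] (K ∩ ball x t) ≤ μH[d] (K ∩ ball y (2 * t)) := measure_mono hsub
      _ ≤ ENNReal.ofReal (a * (2 * t) ^ d) :=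
          hreg y hyK (2 * t) h2t (by rw [hDtoReal]; exact hle)
      _ ≤ ENNReal.ofReal (2 * (a * (2 * t) ^ d)) := ENNReal.ofReal_le_ofReal (by linarith)
  · rcases eq_or_lt_of_le hD0 with hD0' | hDpos
    · have hsub : K.Subsingleton := by
        rw [← EMetric.diam_eq_zero_iff]
        have h0 : (EMetric.diam K).toReal = 0 := by rw [hDtoReal, ← hD0']
        exact ((ENNReal.toReal_eq_zero_iff _).1 h0).resolve_right hdtop
      have hss : K ∩ ball x t ⊆ {y, y} := fun z hz => by
        have := hsub hz.1 hyK; simp [this]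
      calc μH[d] (K ∩ ball x t) ≤ μH[d] ({y, y} : Set ℂ) := measure_mono hss
        _ = 0 := pair_hausdorff_zero hd y y
        _ ≤ _ := zero_le
    · obtain ⟨p, hp, q, hq, hpq⟩ := exists_dist_eq_diam' hK ⟨y, hyK⟩
      set A := (p + q) / 2 + (Real.sqrt 3 / 2 : ℝ) * Complex.I * (q - p) with hA
      set B := (p + q) / 2 - (Real.sqrt 3 / 2 : ℝ) * Complex.I * (q - p) with hB
      have hcover : K ⊆ (K ∩ ball p D) ∪ ((K ∩ ball q D) ∪ {A, B}) := by
        intro w hw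
        have hwp : dist w p ≤ D := Metric.dist_le_diam_of_mem hKb hw hp
        have hwq : dist w q ≤ D := Metric.dist_le_diam_of_mem hKb hw hq
        rcases lt_or_eq_of_le hwp with h | h
        · exact Or.inl ⟨hw, mem_ball.2 h⟩
        rcases lt_or_eq_of_le hwq with h' | h'
        · exact Or.inr (Or.inl ⟨hw, mem_ball.2 h'⟩)
        · right; right
          rcases equilateral_mem hDpos h h' hpq with hA' | hB'
          · exact Or.inl hA'
          · exact Or.inr hB'
      have hDle : D ≤ (EMetric.diam K).toReal := le_of_eq hDtoReal.symm
      have hballp := hreg p hp D hDpos hDle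
      have hballq := hreg q hq D hDpos hDle
      have hDpow : a * D ^ d ≤ a * (2 * t) ^ d :=
        mul_le_mul_of_nonneg_left (Real.rpow_le_rpow hD0 hltD.le hd.le) ha.le
      have hDnn : (0:ℝ) ≤ a * D ^ d := mul_nonneg ha.le (Real.rpow_nonneg hD0 d)
      calc μH[d] (K ∩ ball x t) ≤ μH[d] K := measure_mono inter_subset_left
        _ ≤ μH[d] (K ∩ ball p D) + μH[d] ((K ∩ ball q D) ∪ {A, B}) :=
            (measure_mono hcover).trans (measure_union_le _ _)
        _ ≤ μH[d] (K ∩ ball p D) + (μH[d] (K ∩ ball q D) + μH[d] ({A, B} : Set ℂ)) :=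
            add_le_add_right (measure_union_le _ _) _
        _ = μH[d] (K ∩ ball p D) + μH[d] (K ∩ ball q D) := by
            rw [pair_hausdorff_zero hd A B, add_zero]
        _ ≤ ENNReal.ofReal (a * D ^ d) + ENNReal.ofReal (a * D ^ d) :=
            add_le_add hballp hballq
        _ = ENNReal.ofReal (a * D ^ d + a * D ^ d) := by
            rw [ENNReal.ofReal_add hDnn hDnn]
        _ ≤ ENNReal.ofReal (2 * (a * (2 * t) ^ d)) :=
            ENNReal.ofReal_le_ofReal (by linarith)

lemma ahlfors_subset {K ω : Set ℂ} {d a : ℝ} (hK : IsCompact K)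
    (hreg : AhlforsUpper K d a) (hsub : ω ⊆ K) : AhlforsUpper ω d a := by
  intro y hy s hs hsd
  have hdtop : EMetric.diam K ≠ ⊤ := Metric.isBounded_iff_ediam_ne_top.1 hK.isBounded
  have hsd' : s ≤ (EMetric.diam K).toReal :=
    hsd.trans (ENNReal.toReal_mono hdtop (EMetric.diam_mono hsub))
  exact (measure_mono (inter_subset_inter_left _ hsub)).trans (hreg y (hsub hy) s hs hsd')

lemma two_d_le {d r : ℝ} (hd : 0 < d) (hr0 : 0 < r) (hr : r < 1) :
    2 * d ≤ (2 * Real.exp 1 / r) ^ d := by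
  have h1 : (2 : ℝ) * Real.exp 1 ≤ 2 * Real.exp 1 / r := by
    rw [le_div_iff₀ hr0]
    nlinarith [Real.exp_pos 1]
  have h2 : ((2 : ℝ) * Real.exp 1) ^ d ≤ (2 * Real.exp 1 / r) ^ d :=
    Real.rpow_le_rpow (by positivity) h1 hd.le
  have h3 : ((2 : ℝ) * Real.exp 1) ^ d = 2 ^ d * Real.exp d := by
    rw [Real.mul_rpow (by norm_num) (Real.exp_pos 1).le, Real.exp_one_rpow]
  have hlog2 : (0.6931471803 : ℝ) < Real.log 2 := Real.log_two_gt_d9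
  have h4 : (1 : ℝ) + 0.6931471803 * d ≤ 2 ^ d := by
    rw [Real.rpow_def_of_pos (by norm_num : (0:ℝ) < 2)]
    have h := Real.add_one_le_exp (Real.log 2 * d)
    nlinarith
  have h5 : (1 : ℝ) + d ≤ Real.exp d := by linarith [Real.add_one_le_exp d]
  have key : 2 * d ≤ 2 ^ d * Real.exp d := by
    have hprod : ((1 : ℝ) + 0.6931471803 * d) * (1 + d) ≤ 2 ^ d * Real.exp d :=
      mul_le_mul h4 h5 (by linarith) (by positivity)
    nlinarith [sq_nonneg (d - 1)]
  linarith [h3 ▸ h2]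

lemma base_le {d a r t : ℝ} (hd : 0 < d) (ha : 0 < a) (hr0 : 0 < r) (hr : r < 1)
    (ht : 0 < t) :
    2 * (a * (2 * t) ^ d) ≤ (4 * Real.exp 1 * t) ^ d * a / (r ^ d * d) := by
  have he : (0:ℝ) < Real.exp 1 := Real.exp_pos 1
  have hR : (0:ℝ) < r ^ d := Real.rpow_pos_of_pos hr0 d
  have hX : (0:ℝ) < (2 * t) ^ d := Real.rpow_pos_of_pos (by linarith) d
  have hY : (0:ℝ) < (2 * Real.exp 1 / r) ^ d := Real.rpow_pos_of_pos (by positivity) d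
  have hsplit : (4 * Real.exp 1 * t) ^ d
      = (2 * t) ^ d * (2 * Real.exp 1 / r) ^ d * r ^ d := by
    rw [← Real.mul_rpow (by positivity) (by positivity),
        ← Real.mul_rpow (by positivity) hr0.le]
    congr 1
    field_simp
    ring
  have h2d : 2 * d ≤ (2 * Real.exp 1 / r) ^ d := two_d_le hd hr0 hr
  rw [le_div_iff₀ (by positivity)]
  rw [hsplit]
  nlinarith [mul_le_mul_of_nonneg_left h2d (by positivity : (0:ℝ) ≤ (2 * t) ^ d * r ^ d * a)]

lemma isOpen_lt_of_usc {f : ℂ → ℝ} {U : Set ℂ} (hU : IsOpen U)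
    (hf : UpperSemicontinuousOn f U) (b : ℝ) :
    IsOpen {y ∈ U | f y < b} := by
  rw [isOpen_iff_mem_nhds]
  rintro z ⟨hzU, hzf⟩
  have h := hf z hzU b hzf
  rw [hU.nhdsWithin_eq hzU] at h
  filter_upwards [h, hU.mem_nhds hzU] with w h1 h2
  exact ⟨h2, h1⟩

lemma measurableSet_le_of_usc {f : ℂ → ℝ} {U : Set ℂ} (hU : IsOpen U)
    (hf : UpperSemicontinuousOn f U) (b : ℝ) :
    MeasurableSet {y ∈ U | f y ≤ b} := by
  have heq : {y ∈ U | f y ≤ b} = ⋂ n : ℕ, {y ∈ U | f y < b + 1 / (n + 1)} := by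
    ext y
    simp only [mem_setOf_eq, mem_iInter]
    constructor
    · rintro ⟨h1, h2⟩ n
      exact ⟨h1, lt_of_le_of_lt h2 (lt_add_of_pos_right _ (by positivity))⟩
    · intro h
      refine ⟨(h 0).1, ?_⟩
      by_contra hc
      push_neg at hc
      obtain ⟨n, hn⟩ := exists_nat_one_div_lt (sub_pos.2 hc)
      exact absurd ((h n).2) (by linarith)
  rw [heq]
  exact MeasurableSet.iInter fun n => (isOpen_lt_of_usc hU hf _).measurableSet

/-- Lemma 3.4: exponential decay of the distribution function of `f' = f_{x,t} - f`
on `K_{x,t}`, where `c = c(r)` is the constant from the Cartan-type estimate. -/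
theorem distribution_function_bound (r : ℝ) (hr0 : 0 < r) (hr : r < 1)
    (f : ℂ → ℝ) (M₁ M₂ : ℝ) (hf : SubharmonicOn f (ball 0 1))
    (hM₁ : ∀ z ∈ ball (0:ℂ) 1, f z ≤ M₁) (hM₂ : M₂ ≤ sSup (f '' ball (0:ℂ) r))
    (d a : ℝ) (hd : 0 < d) (ha : 0 < a)
    (K : Set ℂ) (hK : IsCompact K) (hKr : K ⊆ ball (0:ℂ) r)
    (hreg : AhlforsUpper K d a) (c : ℝ) (hc : 0 < c)
    (hcartan : ∀ (x : ℂ) (t : ℝ) (ω : Set ℂ) (ε : ℝ), 0 < t → 0 < ε →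
      IsCompact ω → ω ⊆ ball x t → AhlforsUpper ω d a →
      ENNReal.ofReal ε ≤ μH[d] ω → ball x (t / r) ⊆ ball (0:ℂ) r →
      sSup (f '' ball x t) ≤ sSup (f '' ω) +
        (M₁ - M₂) * c *
          Real.log (4 * Real.exp 1 * t * a ^ (1/d) / (r * (d * ε) ^ (1/d)))) :
    ∀ (x : ℂ) (t : ℝ), 0 < t → ball x (t / r) ⊆ ball (0:ℂ) r →
      ∀ lam : ℝ, 0 ≤ lam →
        μH[d] {y ∈ ball x t ∩ K | lam ≤ sSup (f '' ball x t) - f y} ≤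
          ENNReal.ofReal ((4 * Real.exp 1 * t) ^ d * a / (r ^ d * d) *
            Real.exp (-lam * d / (c * (M₁ - M₂)))) := by
  intro x t ht hball lam hlam
  have he1 : (0:ℝ) < Real.exp 1 := Real.exp_pos 1
  set S := sSup (f '' ball x t) with hS
  set ω₀ := {y ∈ ball x t ∩ K | lam ≤ S - f y} with hω₀
  set base := (4 * Real.exp 1 * t) ^ d * a / (r ^ d * d) with hbase
  set B := base * Real.exp (-lam * d / (c * (M₁ - M₂))) with hB
  have hbase_pos : 0 < base := by
    have h1 : (0:ℝ) < (4 * Real.exp 1 * t) ^ d := Real.rpow_pos_of_pos (by positivity) d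
    have h2 : (0:ℝ) < r ^ d := Real.rpow_pos_of_pos hr0 d
    positivity
  have hB_pos : 0 < B := by positivity
  -- M₂ ≤ M₁
  have hM : 0 ≤ M₁ - M₂ := by
    have hne : (f '' ball (0:ℂ) r).Nonempty := (nonempty_ball.2 hr0).image f
    have hub : sSup (f '' ball (0:ℂ) r) ≤ M₁ := csSup_le hne (by
      rintro _ ⟨z, hz, rfl⟩
      exact hM₁ z (ball_subset_ball hr.le hz))
    linarith
  have hω₀K : ω₀ ⊆ K := by rintro y ⟨⟨h1, h2⟩, h3⟩; exact h2
  have hω₀ball : ω₀ ⊆ ball x t := by rintro y ⟨⟨h1, h2⟩, h3⟩; exact h1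
  -- finiteness of μH[d] K
  have hKbound : μH[d] K ≤ ENNReal.ofReal (2 * (a * (2 * r) ^ d)) := by
    have := geom_bound hd ha hK hreg (0:ℂ) hr0
    rwa [Set.inter_eq_self_of_subset_left hKr] at this
  have hμK_ne : μH[d] K ≠ ⊤ :=
    (lt_of_le_of_lt hKbound ENNReal.ofReal_lt_top).ne
  have hμω_ne : μH[d] ω₀ ≠ ⊤ :=
    (lt_of_le_of_lt (measure_mono hω₀K) (lt_of_le_of_lt hKbound ENNReal.ofReal_lt_top)).ne
  -- measurability of ω₀
  have hω₀meas : MeasurableSet ω₀ := by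
    have hK1 : K ⊆ ball (0:ℂ) 1 := hKr.trans (ball_subset_ball hr.le)
    have heq : ω₀ = (ball x t ∩ K) ∩ {y ∈ ball (0:ℂ) 1 | f y ≤ S - lam} := by
      ext y
      simp only [hω₀, mem_setOf_eq, mem_inter_iff]
      constructor
      · rintro ⟨⟨h1, h2⟩, h3⟩
        exact ⟨⟨h1, h2⟩, hK1 h2, by linarith⟩
      · rintro ⟨⟨h1, h2⟩, h3, h4⟩
        exact ⟨⟨h1, h2⟩, by linarith⟩
    rw [heq]
    exact (isOpen_ball.measurableSet.inter hK.measurableSet).inter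
      (measurableSet_le_of_usc isOpen_ball hf.1 _)
  -- main contradiction argument
  by_contra hcon
  push_neg at hcon
  set ε := (μH[d] ω₀).toReal with hε
  have hεeq : ENNReal.ofReal ε = μH[d] ω₀ := ENNReal.ofReal_toReal hμω_ne
  have hBε : B < ε := by
    rw [← hεeq] at hcon
    exact (ENNReal.ofReal_lt_ofReal_iff_of_nonneg hB_pos.le).1 hcon
  set δ := (ε - B) / 2 with hδdef
  have hδ : 0 < δ := by simp only [hδdef]; linarith
  set ε' := (ε + B) / 2 with hε'def
  have hε'B : B < ε' := by simp only [hε'def]; linarith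
  have hε'pos : 0 < ε' := lt_trans hB_pos hε'B
  -- inner approximation by a closed (hence compact) set
  set ν := (μH[d]).restrict K with hν
  haveI : IsFiniteMeasure ν := ⟨by
    rw [hν, Measure.restrict_apply_univ]
    exact lt_of_le_of_lt hKbound ENNReal.ofReal_lt_top⟩
  have hνω : ν ω₀ = μH[d] ω₀ := by
    rw [hν, Measure.restrict_apply' hK.isClosed.measurableSet,
      Set.inter_eq_self_of_subset_left hω₀K]
  obtain ⟨F, hFsub, hFclosed, hFlt⟩ :=
    hω₀meas.exists_isClosed_lt_add (μ := ν)
      (by rw [hνω]; exact hμω_ne) (ε := ENNReal.ofReal δ) (ENNReal.ofReal_pos.2 hδ).ne'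
  have hFK : F ⊆ K := hFsub.trans hω₀K
  have hFcomp : IsCompact F := hK.of_isClosed_subset hFclosed hFK
  have hνF : ν F = μH[d] F := by
    rw [hν, Measure.restrict_apply' hK.isClosed.measurableSet,
      Set.inter_eq_self_of_subset_left hFK]
  have hμF : ENNReal.ofReal ε' ≤ μH[d] F := by
    have h1 : ENNReal.ofReal ε < μH[d] F + ENNReal.ofReal δ := by
      rw [hεeq, ← hνω, ← hνF]; exact hFlt
    have h2 : ENNReal.ofReal ε = ENNReal.ofReal ε' + ENNReal.ofReal δ := by
      rw [← ENNReal.ofReal_add hε'pos.le hδ.le]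
      congr 1
      simp only [hε'def, hδdef]; ring
    rw [h2] at h1
    exact le_of_lt ((ENNReal.add_lt_add_iff_right ENNReal.ofReal_ne_top).1 h1)
  have hFne : F.Nonempty := by
    rcases F.eq_empty_or_nonempty with rfl | h
    · rw [measure_empty] at hμF
      have : ε' ≤ 0 := by
        simpa using ENNReal.ofReal_eq_zero.1 (le_zero_iff.1 hμF)
      linarith
    · exact h
  -- apply the Cartan-type estimate
  have hcart := hcartan x t F ε' ht hε'pos hFcomp (hFsub.trans hω₀ball)
    (ahlfors_subset hK hreg hFK) hμF hball
  have hsupF : sSup (f '' F) ≤ S - lam := by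
    refine csSup_le (hFne.image f) ?_
    rintro _ ⟨y, hyF, rfl⟩
    have h3 := (hFsub hyF).2
    linarith
  set X := 4 * Real.exp 1 * t * a ^ (1/d) / (r * (d * ε') ^ (1/d)) with hX
  have hlog : lam ≤ (M₁ - M₂) * c * Real.log X := by
    linarith [hcart, hsupF]
  rcases eq_or_lt_of_le hM with hM0 | hMpos
  · -- M₁ = M₂ : then lam = 0 and we contradict the geometric bound
    have hlam0 : lam = 0 := le_antisymm (by rw [← hM0] at hlog; linarith) hlam
    have hBeq : B = base := by
      rw [hB, hlam0]
      simp
    have hFKb : F ⊆ K ∩ ball x t := fun y hy =>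
      ⟨(hFsub hy).1.2, (hFsub hy).1.1⟩
    have hchain : ENNReal.ofReal ε' ≤ ENNReal.ofReal (2 * (a * (2 * t) ^ d)) :=
      hμF.trans ((measure_mono hFKb).trans (geom_bound hd ha hK hreg x ht))
    have hε'le : ε' ≤ 2 * (a * (2 * t) ^ d) := by
      have hnn : (0:ℝ) ≤ 2 * (a * (2 * t) ^ d) := by
        have := Real.rpow_nonneg (by linarith : (0:ℝ) ≤ 2 * t) d
        positivity
      exact (ENNReal.ofReal_le_ofReal_iff hnn).1 hchain
    have := base_le hd ha hr0 hr ht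
    rw [← hbase] at this
    linarith [hε'B, hBeq ▸ hε'B]
  · -- M₁ > M₂ : use the logarithmic estimate
    have hMc : 0 < (M₁ - M₂) * c := by positivity
    set E := lam / ((M₁ - M₂) * c) with hE
    have hE0 : 0 ≤ E := by positivity
    have hlogX : E ≤ Real.log X := by
      rw [hE, div_le_iff₀ hMc]
      linarith
    have hdenpos : (0:ℝ) < r * (d * ε') ^ (1/d) := by
      have : (0:ℝ) < (d * ε') ^ (1/d) := Real.rpow_pos_of_pos (by positivity) _
      positivity
    have hnumpos : (0:ℝ) < 4 * Real.exp 1 * t * a ^ (1/d) := by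
      have : (0:ℝ) < a ^ (1/d) := Real.rpow_pos_of_pos ha _
      positivity
    have hXpos : 0 < X := by rw [hX]; positivity
    have hexp : Real.exp E ≤ X := by
      calc Real.exp E ≤ Real.exp (Real.log X) := Real.exp_le_exp.2 hlogX
        _ = X := Real.exp_log hXpos
    have h7 : (d * ε') ^ (1/d) ≤ 4 * Real.exp 1 * t * a ^ (1/d) / (r * Real.exp E) := by
      rw [le_div_iff₀ (by positivity)]
      rw [hX, le_div_iff₀ hdenpos] at hexp
      nlinarith [hexp]
    have h8 := Real.rpow_le_rpow (Real.rpow_nonneg (by positivity) _) h7 hd.le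
    have hLHS : ((d * ε') ^ (1/d)) ^ d = d * ε' := by
      rw [one_div]
      exact Real.rpow_inv_rpow (by positivity) hd.ne'
    have hRHS : (4 * Real.exp 1 * t * a ^ (1/d) / (r * Real.exp E)) ^ d
        = (4 * Real.exp 1 * t) ^ d * a / (r ^ d * Real.exp (E * d)) := by
      rw [Real.div_rpow (by positivity) (by positivity),
        Real.mul_rpow (by positivity) (Real.rpow_nonneg ha.le _),
        Real.mul_rpow hr0.le (Real.exp_pos E).le,
        one_div, Real.rpow_inv_rpow ha.le hd.ne',
        ← Real.exp_mul]
    rw [hLHS, hRHS] at h8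
    have hrd : (0:ℝ) < r ^ d := Real.rpow_pos_of_pos hr0 d
    have hexpEd : (0:ℝ) < Real.exp (E * d) := Real.exp_pos _
    have h8' : d * ε' * (r ^ d * Real.exp (E * d)) ≤ (4 * Real.exp 1 * t) ^ d * a := by
      rw [le_div_iff₀ (by positivity)] at h8
      exact h8
    have h9 : ε' ≤ (4 * Real.exp 1 * t) ^ d * a / (r ^ d * Real.exp (E * d)) / d := by
      rw [div_div, le_div_iff₀ (by positivity)]
      nlinarith [h8']
    have hBeq2 : B = (4 * Real.exp 1 * t) ^ d * a / (r ^ d * Real.exp (E * d)) / d := by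
      have harg : -lam * d / (c * (M₁ - M₂)) = -(E * d) := by
        rw [hE, mul_comm c (M₁ - M₂)]; ring
      rw [hB, hbase, harg, Real.exp_neg]
      field_simp
    rw [hBeq2] at hε'B
    linarith
end
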